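/- In the profile P over n voters where voter j approves {a_1,...,a_k, b_1,...,b_{j-1}}, the nk+1 committees W_{p,q} (for 1 ≤ p ≤ k, 1 ≤ q ≤ n, plus W_{k+1,1}), where W_{p,1} = {a_1,...,a_{k−p+1}, c_1,...,c_{p−1}} and W_{p,q} = {a_1,...,a_{k−p}, b_{q−1}, c_1,...,c_{p−1}} for q > 1, form a chain under Pareto dominance: W_{p1,q1} Pareto-dominates W_{p2,q2} whenever p1 < p2, or p1 = p2 and q1 < q2. -/
import Mathlib


open scoped Classical

noncomputable section

/-- A profile assigns to each of the `n` voters an approval ballot (a finite set of alternatives). -/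
abbrev Profile (A : Type) (n : ℕ) := Fin n → Finset A

/-- Two profiles are neighboring if they differ in at most one voter's ballot. -/
def Neighboring {A : Type} {n : ℕ} (P P' : Profile A n) : Prop :=
  ∃ i : Fin n, ∀ j : Fin n, j ≠ i → P j = P' j

/-- `W'` Pareto-dominates `W` in profile `P`. -/
def ParetoDom {A : Type} [DecidableEq A] {n : ℕ} (P : Profile A n) (W' W : Finset A) : Prop :=
  (∀ i, (W ∩ P i).card ≤ (W' ∩ P i).card) ∧ (∃ i, (W ∩ P i).card < (W' ∩ P i).card)

/-- The set of alternatives approved by every voter in `V`. -/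
def commonApproved {A : Type} [Fintype A] {n : ℕ} (P : Profile A n) (V : Finset (Fin n)) :
    Finset A :=
  Finset.univ.filter (fun a => ∀ i ∈ V, a ∈ P i)

/-- `V` is an `ℓ`-cohesive group for `(P, k)`: `|V| ≥ ℓ·n/k` and `|⋂_{i∈V} P i| ≥ ℓ`. -/
def Cohesive {A : Type} [Fintype A] {n : ℕ} (P : Profile A n) (k ℓ : ℕ)
    (V : Finset (Fin n)) : Prop :=
  ℓ * n ≤ V.card * k ∧ ℓ ≤ (commonApproved P V).card

/-- Committee `W` (of size `k`) satisfies justified representation for `(P, k)`. -/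
def JRsat {A : Type} [Fintype A] [DecidableEq A] {n : ℕ} (P : Profile A n) (k : ℕ)
    (W : Finset A) : Prop :=
  W.card = k ∧ ∀ V : Finset (Fin n), Cohesive P k 1 V → ∃ i ∈ V, (P i ∩ W).Nonempty

/-- Committee `W` satisfies proportional justified representation for `(P, k)`. -/
def PJRsat {A : Type} [Fintype A] [DecidableEq A] {n : ℕ} (P : Profile A n) (k : ℕ)
    (W : Finset A) : Prop :=
  W.card = k ∧ ∀ (ℓ : ℕ) (V : Finset (Fin n)), 1 ≤ ℓ → Cohesive P k ℓ V →
    ℓ ≤ (W ∩ V.biUnion P).card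

/-- Committee `W` satisfies extended justified representation for `(P, k)`. -/
def EJRsat {A : Type} [Fintype A] [DecidableEq A] {n : ℕ} (P : Profile A n) (k : ℕ)
    (W : Finset A) : Prop :=
  W.card = k ∧ ∀ (ℓ : ℕ) (V : Finset (Fin n)), 1 ≤ ℓ → Cohesive P k ℓ V →
    ∃ i ∈ V, ℓ ≤ (P i ∩ W).card

/-- `W` is a Condorcet committee for `(P, k)`: against every other size-`k` committee,
strictly more than half of the voters prefer `W`. -/
def CondorcetCommittee {A : Type} [Fintype A] [DecidableEq A] {n : ℕ} (P : Profile A n)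
    (k : ℕ) (W : Finset A) : Prop :=
  W.card = k ∧ ∀ W' : Finset A, W'.card = k → W' ≠ W →
    n < 2 * (Finset.univ.filter
      (fun i : Fin n => (P i ∩ W').card < (P i ∩ W).card)).card

/-- A randomized approval-based committee (ABC) rule: for each profile and committee size `k`,
a probability distribution over the size-`k` committees. -/
structure ABCRule (A : Type) [Fintype A] [DecidableEq A] (n : ℕ) where
  prob : Profile A n → ℕ → Finset A → ℝ
  nonneg : ∀ P k W, 0 ≤ prob P k W
  size_eq : ∀ P k W, prob P k W ≠ 0 → W.card = k
  sum_one : ∀ P k, k ≤ Fintype.card A →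
    ∑ W ∈ Finset.univ.filter (fun W : Finset A => W.card = k), prob P k W = 1

variable {A : Type} [Fintype A] [DecidableEq A] {n : ℕ}

/-- ε-differential privacy at committee size `k`. -/
def DPAt (f : ABCRule A n) (k : ℕ) (ε : ℝ) : Prop :=
  ∀ (P P' : Profile A n) (W : Finset A),
    Neighboring P P' → f.prob P k W ≤ Real.exp ε * f.prob P' k W

/-- ε-differential privacy: single-ballot changes alter each committee's winning
probability by a factor of at most `e^ε`. -/
def DP (f : ABCRule A n) (ε : ℝ) : Prop := ∀ k : ℕ, DPAt f k ε

/-- Neutrality: the rule commutes with permutations of the alternatives. -/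
def Neutral (f : ABCRule A n) : Prop :=
  ∀ (σ : Equiv.Perm A) (P : Profile A n) (k : ℕ) (W : Finset A),
    f.prob (fun i => (P i).image σ) k (W.image σ) = f.prob P k W

/-- θ-JR: each JR committee wins with probability at least θ times that of each non-JR one. -/
def ThetaJR (f : ABCRule A n) (θ : ℝ) : Prop :=
  ∀ (P : Profile A n) (k : ℕ) (W₁ W₂ : Finset A),
    JRsat P k W₁ → W₂.card = k → ¬ JRsat P k W₂ →
      θ * f.prob P k W₂ ≤ f.prob P k W₁

/-- ρ-PJR. -/
def RhoPJR (f : ABCRule A n) (ρ : ℝ) : Prop :=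
  ∀ (P : Profile A n) (k : ℕ) (W₁ W₂ : Finset A),
    PJRsat P k W₁ → W₂.card = k → ¬ PJRsat P k W₂ →
      ρ * f.prob P k W₂ ≤ f.prob P k W₁

/-- κ-EJR. -/
def KappaEJR (f : ABCRule A n) (κ : ℝ) : Prop :=
  ∀ (P : Profile A n) (k : ℕ) (W₁ W₂ : Finset A),
    EJRsat P k W₁ → W₂.card = k → ¬ EJRsat P k W₂ →
      κ * f.prob P k W₂ ≤ f.prob P k W₁

/-- Exact Condorcet criterion: whenever a Condorcet committee exists, it wins with
probability one. -/
def CondorcetCrit (f : ABCRule A n) : Prop :=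
  ∀ (P : Profile A n) (k : ℕ) (W : Finset A),
    CondorcetCommittee P k W → f.prob P k W = 1

/-- η-Condorcet criterion. -/
def EtaCC (f : ABCRule A n) (η : ℝ) : Prop :=
  ∀ (P : Profile A n) (k : ℕ) (Wc W : Finset A),
    CondorcetCommittee P k Wc → W.card = k → W ≠ Wc →
      η * f.prob P k W ≤ f.prob P k Wc

/-- Exact Pareto efficiency at committee size `k`: no committee in the support is
Pareto-dominated by another size-`k` committee. -/
def ParetoEffAt (f : ABCRule A n) (k : ℕ) : Prop :=
  ∀ (P : Profile A n) (W : Finset A), f.prob P k W ≠ 0 →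
    ∀ W' : Finset A, W'.card = k → ¬ ParetoDom P W' W

/-- β-Pareto efficiency at committee size `k`. -/
def BetaPEAt (f : ABCRule A n) (k : ℕ) (β : ℝ) : Prop :=
  ∀ (P : Profile A n) (W₁ W₂ : Finset A), W₁.card = k → W₂.card = k →
    ParetoDom P W₁ W₂ → β * f.prob P k W₂ ≤ f.prob P k W₁

/-- The approval voting score of a committee. -/
def AV (P : Profile A n) (W : Finset A) : ℕ := ∑ j, (P j ∩ W).card

/-- The set of size-`k` committees satisfying JR for `(P, k)`. -/
def JRset (P : Profile A n) (k : ℕ) : Finset (Finset A) :=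
  Finset.univ.filter (fun W => JRsat P k W)

/-- The witness profile: voter `j` (0-indexed) approves `a_1, …, a_k` (encoded as
`1, …, k`) together with `b_1, …, b_j` (encoded as `k+1, …, k+j`). -/
def chainProfile (k n : ℕ) : Profile ℕ n :=
  fun j => Finset.Icc 1 k ∪ Finset.Icc (k + 1) (k + (j : ℕ))

/-- The committee `W_{p,q}`: for `q = 1` it is `{a_1,…,a_{k−p+1}} ∪ {c_1,…,c_{p−1}}`,
and for `q > 1` it is `{a_1,…,a_{k−p}} ∪ {b_{q−1}} ∪ {c_1,…,c_{p−1}}`, where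
`c_i` is encoded as `k + n + i`. -/
def Wpq (k n p q : ℕ) : Finset ℕ :=
  if q = 1 then
    Finset.Icc 1 (k + 1 - p) ∪ Finset.Icc (k + n + 1) (k + n + (p - 1))
  else
    (Finset.Icc 1 (k - p) ∪ {k + (q - 1)}) ∪ Finset.Icc (k + n + 1) (k + n + (p - 1))

lemma chain_card_inter (k n p q : ℕ) (hp : 1 ≤ p) (hq : 1 ≤ q) (hqn : q ≤ n)
    (hpk : p ≤ k ∨ q = 1) (hpk1 : p ≤ k + 1) (j : Fin n) :
    (Wpq k n p q ∩ chainProfile k n j).card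
      = if q ≤ (j : ℕ) + 1 then k + 1 - p else k - p := by
  have hj : (j : ℕ) < n := j.isLt
  by_cases hq1 : q = 1
  · have hset : Wpq k n p q ∩ chainProfile k n j = Finset.Icc 1 (k + 1 - p) := by
      ext x
      simp [Wpq, chainProfile, hq1, Finset.mem_Icc]
      omega
    rw [hset, if_pos (by omega), Nat.card_Icc]
    omega
  · have hpk' : p ≤ k := by tauto
    by_cases hqj : q ≤ (j : ℕ) + 1
    · have hset : Wpq k n p q ∩ chainProfile k n j
          = Finset.Icc 1 (k - p) ∪ {k + (q - 1)} := by
        ext x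
        simp only [Wpq, chainProfile, if_neg hq1, Finset.mem_inter, Finset.mem_union,
          Finset.mem_Icc, Finset.mem_singleton]
        omega
      rw [hset, if_pos hqj, Finset.card_union_of_disjoint, Nat.card_Icc,
        Finset.card_singleton]
      · omega
      · simp only [Finset.disjoint_singleton_right, Finset.mem_Icc]
        omega
    · have hset : Wpq k n p q ∩ chainProfile k n j = Finset.Icc 1 (k - p) := by
        ext x
        simp only [Wpq, chainProfile, if_neg hq1, Finset.mem_inter, Finset.mem_union,
          Finset.mem_Icc, Finset.mem_singleton]
        omega
      rw [hset, if_neg hqj, Nat.card_Icc]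
      omega


/-- the committees `W_{p,q}` form a chain under Pareto dominance in the
profile above: `W_{p₁,q₁}` Pareto-dominates `W_{p₂,q₂}` whenever `p₁ < p₂`, or
`p₁ = p₂` and `q₁ < q₂` (indices in range, including the final committee `W_{k+1,1}`). -/
theorem chain_paretoDom (k n : ℕ) (hk : 0 < k) (hn : 0 < n)
    (p₁ q₁ p₂ q₂ : ℕ)
    (hp₁ : 1 ≤ p₁) (hp₁k : p₁ ≤ k) (hq₁ : 1 ≤ q₁) (hq₁n : q₁ ≤ n)
    (hq₂ : 1 ≤ q₂) (hq₂n : q₂ ≤ n)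
    (hp₂ : p₂ ≤ k ∨ (p₂ = k + 1 ∧ q₂ = 1))
    (hlt : p₁ < p₂ ∨ (p₁ = p₂ ∧ q₁ < q₂)) :
    ParetoDom (chainProfile k n) (Wpq k n p₁ q₁) (Wpq k n p₂ q₂) := by
  have hp2 : 1 ≤ p₂ := by omega
  have hp2k1 : p₂ ≤ k + 1 := by omega
  have hpk2 : p₂ ≤ k ∨ q₂ = 1 := by tauto
  constructor
  · intro i
    rw [chain_card_inter k n p₁ q₁ hp₁ hq₁ hq₁n (Or.inl hp₁k) (by omega) i,
      chain_card_inter k n p₂ q₂ hp2 hq₂ hq₂n hpk2 hp2k1 i]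
    split_ifs <;> omega
  · refine ⟨⟨q₁ - 1, by omega⟩, ?_⟩
    rw [chain_card_inter k n p₁ q₁ hp₁ hq₁ hq₁n (Or.inl hp₁k) (by omega) _,
      chain_card_inter k n p₂ q₂ hp2 hq₂ hq₂n hpk2 hp2k1 _]
    simp only
    split_ifs <;> omega
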